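/- The second-order vector moments are slaved to the divergence of the stress variable: for every index i ∈ {1, 2, 3} and every x ∈ ℝ³, u⁽²⁾ᵢ(x) = Kn · β₁′ · Σ_{j=1}^{3} ∂ⱼ( d₁ U⁽¹⁾ᵢⱼ + d₂ U⁽²⁾ᵢⱼ )(x); that is, writing w⁰ᵢⱼ = d₁ U⁽¹⁾ᵢⱼ + d₂ U⁽²⁾ᵢⱼ, one has u⁽²⁾ᵢ = Kn β₁′ ∂w⁰ᵢⱼ/∂xⱼ. -/

import Mathlib

/-- The partial derivative `∂ⱼ f` of a scalar field on `ℝ³`. -/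
noncomputable def pd (j : Fin 3) (f : (Fin 3 → ℝ) → ℝ) (x : Fin 3 → ℝ) : ℝ :=
  fderiv ℝ f x (Pi.single j 1)

/-- The second-order vector moments are slaved to the
divergence of the stress variable: under the two moment equations for `u⁽¹⁾ᵢ`
and `u⁽²⁾ᵢ`, with `ℒ²¹ = (c₂/c₁) ℒ¹¹` and `c₁ ℒ²² − c₂ ℒ¹² ≠ 0`, one has
`u⁽²⁾ᵢ = Kn β₁′ ∂ⱼ w⁰ᵢⱼ` where `w⁰ᵢⱼ = d₁ U⁽¹⁾ᵢⱼ + d₂ U⁽²⁾ᵢⱼ`. -/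
theorem second_order_moment_slaved
    (Kn c₁ c₂ d₁ d₂ A₄₅ A₄₆ A₄₈ A₅₇ L11 L12 L21 L22 Abar78 β₁' : ℝ)
    (hKn : Kn ≠ 0) (hc₁ : c₁ ≠ 0) (hd₁ : d₁ ≠ 0)
    (hL21 : L21 = c₂ / c₁ * L11)
    (hdenom : c₁ * L22 - c₂ * L12 ≠ 0)
    (hAbar : Abar78 = c₂ / c₁ * A₄₈ + d₂ / d₁ * A₅₇ - c₂ * d₂ / (c₁ * d₁) * A₄₅)
    (hβ : β₁' = (c₁ * A₅₇ - c₂ * A₄₅) / (d₁ * (c₁ * L22 - c₂ * L12)))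
    (w1 u : (Fin 3 → ℝ) → ℝ)
    (u1 u2 : (Fin 3 → ℝ) → Fin 3 → ℝ)
    (U1 U2 : (Fin 3 → ℝ) → Fin 3 → Fin 3 → ℝ)
    (hw1 : Differentiable ℝ w1) (hu : Differentiable ℝ u)
    (hu1 : ∀ i, Differentiable ℝ fun x => u1 x i)
    (hu2 : ∀ i, Differentiable ℝ fun x => u2 x i)
    (hU1 : ∀ i j, Differentiable ℝ fun x => U1 x i j)
    (hU2 : ∀ i j, Differentiable ℝ fun x => U2 x i j)
    (heq1 : ∀ (i : Fin 3) (x : Fin 3 → ℝ),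
      Real.sqrt 5 * c₁ * pd i w1 x + A₄₅ * ∑ j, pd j (fun y => U1 y i j) x
          + A₄₆ * pd i u x + A₄₈ * ∑ j, pd j (fun y => U2 y i j) x
        = 1 / Kn * (L11 * u1 x i + L12 * u2 x i))
    (heq2 : ∀ (i : Fin 3) (x : Fin 3 → ℝ),
      Real.sqrt 5 * c₂ * pd i w1 x + A₅₇ * ∑ j, pd j (fun y => U1 y i j) x
          + c₂ / c₁ * A₄₆ * pd i u x + Abar78 * ∑ j, pd j (fun y => U2 y i j) x
        = 1 / Kn * (L21 * u1 x i + L22 * u2 x i)) :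
    ∀ (i : Fin 3) (x : Fin 3 → ℝ),
      u2 x i = Kn * β₁' * ∑ j, pd j (fun y => d₁ * U1 y i j + d₂ * U2 y i j) x := by
  intro i x
  have hlin : ∀ j : Fin 3, pd j (fun y => d₁ * U1 y i j + d₂ * U2 y i j) x
      = d₁ * pd j (fun y => U1 y i j) x + d₂ * pd j (fun y => U2 y i j) x := by
    intro j
    unfold pd
    have h1 : DifferentiableAt ℝ (fun y => U1 y i j) x := (hU1 i j).differentiableAt
    have h2 : DifferentiableAt ℝ (fun y => U2 y i j) x := (hU2 i j).differentiableAt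
    rw [fderiv_fun_add (h1.const_mul d₁) (h2.const_mul d₂), fderiv_const_mul h1,
      fderiv_const_mul h2]
    simp
  simp only [hlin]
  rw [Finset.sum_add_distrib, ← Finset.mul_sum, ← Finset.mul_sum]
  have e1 := heq1 i x
  have e2 := heq2 i x
  set S1 := ∑ j, pd j (fun y => U1 y i j) x with hS1
  set S2 := ∑ j, pd j (fun y => U2 y i j) x with hS2
  subst hL21 hAbar hβ
  field_simp at e1 e2
  have key : d₁ * (c₁ * L22 - c₂ * L12) * u2 x i
      = Kn * (c₁ * A₅₇ - c₂ * A₄₅) * (d₁ * S1 + d₂ * S2) := by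
    apply mul_left_cancel₀ (pow_ne_zero 2 hc₁)
    linear_combination (c₁ ^ 2 * d₁ * c₂) * e1 - c₁ ^ 2 * e2
  field_simp
  linear_combination key
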